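/- Let l > n ≥ 3, fix i ∈ {1,...,l−1}, and let A be the graph on {1,...,2l−1} with distinct u,v adjacent iff |u−v| ≤ l−1. For any connected graph F on n vertices, the number of subgraphs of A isomorphic to F that contain the edge (i+1, l+i) and avoid vertex i is at least C(l−2, n−2). -/

import Mathlib

/-- The graph `A_{2l-1}` on vertex set `{1, ..., 2l-1}`, where distinct `i, j`
are adjacent iff `|i - j| ≤ l - 1`. -/
def graphA (l : ℕ) : SimpleGraph {v : ℕ // 1 ≤ v ∧ v ≤ 2 * l - 1} :=
  SimpleGraph.fromRel (fun i j => |(i.val : ℤ) - (j.val : ℤ)| ≤ (l : ℤ) - 1)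

theorem count_special_subgraphs {W : Type*} [Fintype W] (F : SimpleGraph W)
    (n l i : ℕ) (hn : 3 ≤ n) (hl : n < l) (hi1 : 1 ≤ i) (hi2 : i ≤ l - 1)
    (hcard : Fintype.card W = n) (hconn : F.Connected)
    (u u' w : {v : ℕ // 1 ≤ v ∧ v ≤ 2 * l - 1})
    (hu : u.val = i) (hu' : u'.val = i + 1) (hw : w.val = l + i) :
    Nat.choose (l - 2) (n - 2) ≤
      {H : (graphA l).Subgraph | Nonempty (H.coe ≃g F) ∧ H.Adj u' w ∧
        u ∉ H.verts}.ncard := by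
  classical
  have hl4 : 4 ≤ l := by omega
  haveI : Fintype {v : ℕ // 1 ≤ v ∧ v ≤ 2 * l - 1} :=
    Fintype.subtype (Finset.Icc 1 (2 * l - 1)) (fun x => by simp [Finset.mem_Icc])
  -- an edge of F
  obtain ⟨a, b, hab⟩ : ∃ a b : W, F.Adj a b := by
    have hnt : Nontrivial W := Fintype.one_lt_card_iff_nontrivial.mp (by omega)
    obtain ⟨a, b, hne⟩ := hnt
    obtain ⟨p⟩ := hconn a b
    cases p with
    | nil => exact absurd rfl hne
    | cons h _ => exact ⟨_, _, h⟩
  -- the clique candidates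
  have hmapinj : Function.Injective (fun x : {y // y ∈ Finset.Icc (i+2) (l+i-1)} =>
      (⟨x.1, by have := Finset.mem_Icc.mp x.2; omega⟩ : {v : ℕ // 1 ≤ v ∧ v ≤ 2*l-1})) := by
    intro x y hxy
    apply Subtype.ext
    have h2 := congrArg Subtype.val hxy
    simpa using h2
  set T : Finset {v : ℕ // 1 ≤ v ∧ v ≤ 2*l-1} :=
    (Finset.Icc (i+2) (l+i-1)).attach.map ⟨_, hmapinj⟩ with hT
  have hTmem : ∀ x, x ∈ T ↔ i+2 ≤ x.val ∧ x.val ≤ l+i-1 := by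
    intro x
    simp only [hT, Finset.mem_map, Finset.mem_attach, true_and, Function.Embedding.coeFn_mk]
    constructor
    · rintro ⟨y, rfl⟩; exact Finset.mem_Icc.mp y.2
    · intro hx; exact ⟨⟨x.val, Finset.mem_Icc.mpr hx⟩, Subtype.ext rfl⟩
  have hTcard : T.card = l - 2 := by
    rw [hT, Finset.card_map, Finset.card_attach, Nat.card_Icc]; omega
  have hadjA : ∀ x y : {v : ℕ // 1 ≤ v ∧ v ≤ 2*l-1}, x ≠ y →
      i+1 ≤ x.val → x.val ≤ l+i → i+1 ≤ y.val → y.val ≤ l+i → (graphA l).Adj x y := by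
    intro x y hne h1 h2 h3 h4
    simp only [graphA, SimpleGraph.fromRel_adj]
    refine ⟨hne, Or.inl ?_⟩
    rw [abs_le]
    constructor <;> push_cast <;> omega
  -- key construction
  have key : ∀ S : Finset {v : ℕ // 1 ≤ v ∧ v ≤ 2*l-1}, S ⊆ T → S.card = n - 2 →
      ∃ H : (graphA l).Subgraph,
        (Nonempty (H.coe ≃g F) ∧ H.Adj u' w ∧ u ∉ H.verts) ∧
        H.verts = ↑(insert u' (insert w S)) := by
    intro S hST hScard
    have hmemS : ∀ x ∈ S, i+2 ≤ x.val ∧ x.val ≤ l+i-1 := fun x hx => (hTmem x).mp (hST hx)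
    have hu'w : u' ≠ w := by
      intro h; have := congrArg Subtype.val h; omega
    have hwS : w ∉ S := fun h => by have := hmemS w h; omega
    have hu'S : u' ∉ insert w S := by
      simp only [Finset.mem_insert]
      rintro (h | h)
      · exact hu'w h
      · have := hmemS u' h; omega
    set US := insert u' (insert w S) with hUS
    have hUScard : US.card = n := by
      rw [hUS, Finset.card_insert_of_notMem hu'S, Finset.card_insert_of_notMem hwS, hScard]
      omega
    have hmemUS : ∀ x ∈ US, i+1 ≤ x.val ∧ x.val ≤ l+i := by
      intro x hx
      rcases Finset.mem_insert.mp hx with rfl | hx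
      · omega
      rcases Finset.mem_insert.mp hx with rfl | hx
      · omega
      · have := hmemS x hx; omega
    have hu'US : u' ∈ US := Finset.mem_insert_self _ _
    have hwUS : w ∈ US := Finset.mem_insert_of_mem (Finset.mem_insert_self _ _)
    have hcards : Fintype.card W = Fintype.card ↥US := by
      rw [hcard, Fintype.card_coe, hUScard]
    let e0 : W ≃ ↥US := Fintype.equivOfCardEq hcards
    let e1 : W ≃ ↥US := e0.trans (Equiv.swap (e0 a) ⟨u', hu'US⟩)
    let e : W ≃ ↥US := e1.trans (Equiv.swap (e1 b) ⟨w, hwUS⟩)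
    have he1a : e1 a = ⟨u', hu'US⟩ := by
      show (Equiv.swap (e0 a) ⟨u', hu'US⟩) (e0 a) = _
      exact Equiv.swap_apply_left _ _
    have hne_ab : a ≠ b := hab.ne
    have hea : e a = ⟨u', hu'US⟩ := by
      show (Equiv.swap (e1 b) ⟨w, hwUS⟩) (e1 a) = _
      rw [he1a, Equiv.swap_apply_of_ne_of_ne]
      · intro h
        exact hne_ab (e1.injective (he1a.trans h))
      · exact fun h => hu'w (congrArg Subtype.val h)
    have heb : e b = ⟨w, hwUS⟩ := by
      show (Equiv.swap (e1 b) ⟨w, hwUS⟩) (e1 b) = _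
      exact Equiv.swap_apply_left _ _
    set fv : W → {v : ℕ // 1 ≤ v ∧ v ≤ 2*l-1} := fun x => ((e x : ↥US) : _) with hfv
    have hfvinj : Function.Injective fv := fun x y h => e.injective (Subtype.ext h)
    have hfvmem : ∀ x, fv x ∈ US := fun x => (e x).2
    have hfva : fv a = u' := congrArg Subtype.val hea
    have hfvb : fv b = w := congrArg Subtype.val heb
    have hfvsurj : ∀ x ∈ US, ∃ p, fv p = x := fun x hx =>
      ⟨e.symm ⟨x, hx⟩, congrArg Subtype.val (e.apply_symm_apply ⟨x, hx⟩)⟩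
    clear_value fv
    clear hfv hea heb he1a e e1 e0
    have hhom : ∀ {p q : W}, F.Adj p q → (graphA l).Adj (fv p) (fv q) := by
      intro p q hpq
      have h1 := hmemUS _ (hfvmem p)
      have h2 := hmemUS _ (hfvmem q)
      exact hadjA _ _ (fun h => hpq.ne (hfvinj h)) h1.1 h1.2 h2.1 h2.2
    refine ⟨⟨Set.range fv, fun x y => ∃ p q, F.Adj p q ∧ fv p = x ∧ fv q = y,
      ?_, ?_, ?_⟩, ⟨?_, ?_, ?_⟩, ?_⟩
    · rintro x y ⟨p, q, h, rfl, rfl⟩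
      exact hhom h
    · rintro x y ⟨p, q, h, rfl, rfl⟩
      exact ⟨p, rfl⟩
    · refine ⟨?_⟩; rintro x y ⟨p, q, h, rfl, rfl⟩
      exact ⟨q, p, h.symm, rfl, rfl⟩
    · refine ⟨SimpleGraph.Iso.symm ⟨Equiv.ofInjective fv hfvinj, ?_⟩⟩
      intro x y
      simp only [SimpleGraph.Subgraph.coe_adj, Equiv.ofInjective_apply]
      constructor
      · rintro ⟨p, q, h, hp, hq⟩
        rwa [hfvinj hp, hfvinj hq] at h
      · intro h; exact ⟨x, y, h, rfl, rfl⟩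
    · exact ⟨a, b, hab, hfva, hfvb⟩
    · rintro ⟨x, hx⟩
      have hmem : fv x ∈ US := hfvmem x
      rw [hx] at hmem
      have := hmemUS u hmem
      omega
    · ext x
      constructor
      · rintro ⟨p, rfl⟩
        exact hfvmem p
      · intro hx
        exact hfvsurj x hx
  -- finiteness of subgraphs
  have hfinSub : Finite ((graphA l).Subgraph) := by
    have hinj : Function.Injective
        (fun H : (graphA l).Subgraph => (H.verts, H.Adj)) := by
      intro H1 H2 h
      exact SimpleGraph.Subgraph.ext (congrArg Prod.fst h) (congrArg Prod.snd h)
    exact Finite.of_injective _ hinj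
  set t := {H : (graphA l).Subgraph | Nonempty (H.coe ≃g F) ∧ H.Adj u' w ∧
        u ∉ H.verts} with ht
  haveI : Finite ↥t := (Set.toFinite t).to_subtype
  have hrecover : ∀ S : Finset {v : ℕ // 1 ≤ v ∧ v ≤ 2*l-1}, S ⊆ T →
      ((insert u' (insert w S)).erase u').erase w = S := by
    intro S hS
    have hwS : w ∉ S := fun h => by have := (hTmem w).mp (hS h); omega
    have hu'S : u' ∉ insert w S := by
      simp only [Finset.mem_insert]
      rintro (h | h)
      · have := congrArg Subtype.val h; omega
      · have := (hTmem u').mp (hS h); omega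
    rw [Finset.erase_insert hu'S, Finset.erase_insert hwS]
  set P := T.powersetCard (n-2) with hP
  choose f hf1 hf2 using fun S : ↥P =>
    key S.1 (Finset.mem_powersetCard.mp S.2).1 (Finset.mem_powersetCard.mp S.2).2
  have hfinj : Function.Injective f := by
    intro S1 S2 h
    apply Subtype.ext
    have h1 := hf2 S1
    have h2 := hf2 S2
    rw [h, h2] at h1
    have hins : (insert u' (insert w S2.1) : Finset _) = insert u' (insert w S1.1) :=
      Finset.coe_injective h1
    have e1 := hrecover S1.1 (Finset.mem_powersetCard.mp S1.2).1
    have e2 := hrecover S2.1 (Finset.mem_powersetCard.mp S2.2).1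
    rw [← e1, ← e2, hins]
  have hmain : Nat.card ↥P ≤ Nat.card ↥t := by
    refine Nat.card_le_card_of_injective (fun S => ⟨f S, hf1 S⟩) ?_
    intro S1 S2 h
    exact hfinj (congrArg Subtype.val h)
  rw [← Nat.card_coe_set_eq]
  calc Nat.choose (l-2) (n-2) = P.card := by rw [hP, Finset.card_powersetCard, hTcard]
  _ = Nat.card ↥P := (Nat.card_eq_finsetCard P).symm
  _ ≤ Nat.card ↥t := hmain
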